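/- Let n ≥ 2 be an integer, ω = exp(2πi/n), and let m be an odd integer with 1 ≤ m ≤ n. Then Σ_{l=1}^{n−1} ω^{((m−1)/2)·l} / (1 − ω^{−l}) = (n − m)/2. -/

import Mathlib

open Finset

private lemma term_split (x : ℂ) (hx0 : x ≠ 0) (hx1 : x ≠ 1) (k : ℕ) :
    x ^ k / (1 - x⁻¹) = x * (∑ j ∈ Finset.range k, x ^ j) + 1 / (1 - x⁻¹) := by
  have h1 : x - 1 ≠ 0 := sub_ne_zero.mpr hx1
  have h2 : (1 : ℂ) - x⁻¹ ≠ 0 := by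
    rw [sub_ne_zero]
    exact fun h => hx1 (inv_eq_one.mp h.symm)
  rw [geom_sum_eq hx1]
  field_simp
  ring

private lemma sum_Icc_pow (y : ℂ) (n : ℕ) (hn : 2 ≤ n) (hy1 : y ≠ 1) (hyn : y ^ n = 1) :
    ∑ l ∈ Finset.Icc 1 (n - 1), y ^ l = -1 := by
  have hIcc : Finset.Icc 1 (n - 1) = Finset.Ico 1 n := by
    rw [← Finset.Ico_add_one_right_eq_Icc]
    congr 1
    omega
  have hfull : ∑ l ∈ Finset.range n, y ^ l = 0 := by
    rw [geom_sum_eq hy1, hyn]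
    simp
  have hsplit : (∑ l ∈ Finset.Ico 0 1, y ^ l) + ∑ l ∈ Finset.Ico 1 n, y ^ l
      = ∑ l ∈ Finset.Ico 0 n, y ^ l :=
    Finset.sum_Ico_consecutive _ (by omega) (by omega)
  rw [← Finset.range_eq_Ico, ← Finset.range_eq_Ico] at hsplit
  rw [hIcc]
  rw [Finset.sum_range_one, pow_zero, hfull] at hsplit
  linear_combination hsplit

/-- first summation formula, eq. (34) of the paper.
For `n ≥ 2`, `ω = exp(2πi/n)`, and `m` odd with `1 ≤ m ≤ n`,
`Σ_{l=1}^{n−1} ω^{((m−1)/2)·l} / (1 − ω^{−l}) = (n − m)/2`. -/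
theorem sum_formula_one
    (n : ℕ) (hn : 2 ≤ n)
    (ω : ℂ) (hω : ω = Complex.exp (2 * Real.pi * Complex.I / n))
    (m : ℕ) (hm1 : 1 ≤ m) (hmn : m ≤ n) (hmodd : Odd m) :
    ∑ l ∈ Finset.Icc 1 (n - 1), ω ^ (((m - 1) / 2) * l) / (1 - (ω ^ l)⁻¹)
      = ((n : ℂ) - (m : ℂ)) / 2 := by
  obtain ⟨k, hk⟩ := hmodd
  have hprim : IsPrimitiveRoot ω n := by
    rw [hω]; exact Complex.isPrimitiveRoot_exp n (by omega)
  have hωn : ω ^ n = 1 := hprim.pow_eq_one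
  have hω0 : ω ≠ 0 := by
    intro h
    rw [h] at hωn
    simp [zero_pow (by omega : n ≠ 0)] at hωn
  have hpow_ne : ∀ l : ℕ, 1 ≤ l → l ≤ n - 1 → ω ^ l ≠ 1 := fun l h1 h2 =>
    hprim.pow_ne_one_of_pos_of_lt (by omega) (by omega)
  have hkle : k ≤ n - 1 := by omega
  have hdiv : (m - 1) / 2 = k := by omega
  rw [hdiv]
  -- split each term
  have hsplit : ∑ l ∈ Finset.Icc 1 (n - 1), ω ^ (k * l) / (1 - (ω ^ l)⁻¹)
      = ∑ l ∈ Finset.Icc 1 (n - 1),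
          (ω ^ l * (∑ j ∈ Finset.range k, (ω ^ l) ^ j) + 1 / (1 - (ω ^ l)⁻¹)) := by
    refine Finset.sum_congr rfl fun l hl => ?_
    simp only [Finset.mem_Icc] at hl
    have := term_split (ω ^ l) (pow_ne_zero _ hω0) (hpow_ne l hl.1 hl.2) k
    rw [← pow_mul, mul_comm l k] at this
    exact this
  rw [hsplit, Finset.sum_add_distrib]
  -- first part equals -k
  have h1 : ∑ l ∈ Finset.Icc 1 (n - 1), (ω ^ l * ∑ j ∈ Finset.range k, (ω ^ l) ^ j)
      = -(k : ℂ) := by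
    have hterm : ∀ l : ℕ, ω ^ l * ∑ j ∈ Finset.range k, (ω ^ l) ^ j
        = ∑ j ∈ Finset.range k, (ω ^ (j + 1)) ^ l := by
      intro l
      rw [Finset.mul_sum]
      refine Finset.sum_congr rfl fun j _ => ?_
      rw [← pow_succ', ← pow_mul, mul_comm l (j + 1), pow_mul]
    simp only [hterm]
    rw [Finset.sum_comm]
    have hinner : ∀ j ∈ Finset.range k,
        ∑ l ∈ Finset.Icc 1 (n - 1), (ω ^ (j + 1)) ^ l = -1 := by
      intro j hj
      simp only [Finset.mem_range] at hj
      refine sum_Icc_pow _ n hn (hpow_ne (j + 1) (by omega) (by omega)) ?_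
      rw [← pow_mul, mul_comm, pow_mul, hωn, one_pow]
    rw [Finset.sum_congr rfl hinner]
    simp
  -- second part equals (n-1)/2
  have h2 : ∑ l ∈ Finset.Icc 1 (n - 1), 1 / (1 - (ω ^ l)⁻¹) = ((n : ℂ) - 1) / 2 := by
    have hrefl : ∑ l ∈ Finset.Icc 1 (n - 1), 1 / (1 - (ω ^ l)⁻¹)
        = ∑ l ∈ Finset.Icc 1 (n - 1), 1 / (1 - ω ^ l) := by
      refine Finset.sum_nbij' (fun l => n - l) (fun l => n - l) ?_ ?_ ?_ ?_ ?_
      · intro l hl; simp only [Finset.mem_Icc] at hl ⊢; omega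
      · intro l hl; simp only [Finset.mem_Icc] at hl ⊢; omega
      · intro l hl; simp only [Finset.mem_Icc] at hl; show n - (n - l) = l; omega
      · intro l hl; simp only [Finset.mem_Icc] at hl; show n - (n - l) = l; omega
      · intro l hl
        simp only [Finset.mem_Icc] at hl
        have hmul : ω ^ l * ω ^ (n - l) = 1 := by
          rw [← pow_add]
          have : l + (n - l) = n := by omega
          rw [this, hωn]
        show 1 / (1 - (ω ^ l)⁻¹) = 1 / (1 - ω ^ (n - l))
        rw [inv_eq_of_mul_eq_one_right hmul]
    have hpair : ∀ l : ℕ, 1 ≤ l → l ≤ n - 1 →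
        1 / (1 - (ω ^ l)⁻¹) + 1 / (1 - ω ^ l) = 1 := by
      intro l h1' h2'
      have hx0 : ω ^ l ≠ 0 := pow_ne_zero _ hω0
      have hx1 : ω ^ l ≠ 1 := hpow_ne l h1' h2'
      have hd1 : (1 : ℂ) - (ω ^ l)⁻¹ ≠ 0 := by
        rw [sub_ne_zero]; exact fun h => hx1 (inv_eq_one.mp h.symm)
      have hd2 : (1 : ℂ) - ω ^ l ≠ 0 := by
        rw [sub_ne_zero]; exact fun h => hx1 h.symm
      have hd3 : ω ^ l - 1 ≠ 0 := sub_ne_zero.mpr hx1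
      have key : (1 : ℂ) - (ω ^ l)⁻¹ = (ω ^ l - 1) / ω ^ l := by field_simp
      rw [key, one_div_div]
      field_simp
      ring
    have hsum2 : (∑ l ∈ Finset.Icc 1 (n - 1), 1 / (1 - (ω ^ l)⁻¹))
        + ∑ l ∈ Finset.Icc 1 (n - 1), 1 / (1 - ω ^ l) = (n : ℂ) - 1 := by
      rw [← Finset.sum_add_distrib]
      have : ∑ l ∈ Finset.Icc 1 (n - 1), (1 / (1 - (ω ^ l)⁻¹) + 1 / (1 - ω ^ l))
          = ∑ l ∈ Finset.Icc 1 (n - 1), (1 : ℂ) := by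
        refine Finset.sum_congr rfl fun l hl => ?_
        simp only [Finset.mem_Icc] at hl
        exact hpair l hl.1 hl.2
      rw [this, Finset.sum_const, Nat.card_Icc]
      have : n - 1 + 1 - 1 = n - 1 := by omega
      rw [this]
      simp only [nsmul_eq_mul, mul_one]
      push_cast [Nat.cast_sub (by omega : 1 ≤ n)]
      ring
    rw [← hrefl] at hsum2
    linear_combination hsum2 / 2
  rw [h1, h2]
  have hm' : (m : ℂ) = 2 * k + 1 := by push_cast [hk]; ring
  rw [hm']
  ring
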